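/- Let E be a finite linearly ordered set and M a rank-3 paving matroid on E, and for k ∈ {0,1} let 𝒱^k(M) be as in the Pendavingh–Van der Pol encoding (unions over hyperplanes H of the even- /odd-indexed consecutive triples of H). If M has no minor isomorphic to 𝒲³ and no minor isomorphic to M(K₄), then for each k ∈ {0,1}, every 6-element subset of E contains at most 2 members of 𝒱^k(M); equivalently, the rank-3 sparse paving matroids M⁰ and M¹ with circuit-hyperplane families 𝒱⁰(M) and 𝒱¹(M) have no minor isomorphic to 𝒲³ or M(K₄). -/

import Mathlib

open Matroid Set Filter

namespace Paper

variable {α β : Type*}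

/-- Deletion of a set from a matroid. -/
def Delete (M : Matroid α) (D : Set α) : Matroid α := M ↾ (M.E \ D)

/-- Contraction of a set in a matroid, defined via duality. -/
def Contract (M : Matroid α) (C : Set α) : Matroid α := (Delete M✶ C)✶

/-- `N` is a minor of `M` if it is obtained from `M` by a contraction followed by a deletion. -/
def IsMinor (N M : Matroid α) : Prop := ∃ C D : Set α, N = Delete (Contract M C) D

/-- `M` is isomorphic to `N`. -/
def Iso (M : Matroid α) (N : Matroid β) : Prop :=
  ∃ (f : α → β) (hf : Set.InjOn f M.E), M.map f hf = N

/-- `M` has a minor isomorphic to `N`. -/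
def HasIsoMinor (M : Matroid α) (N : Matroid β) : Prop :=
  ∃ M' : Matroid α, IsMinor M' M ∧ Iso M' N

/-- A circuit is a minimal dependent set. -/
def Circuit (M : Matroid α) (C : Set α) : Prop := M.Dep C ∧ ∀ D, D ⊂ C → M.Indep D

/-- A hyperplane is a maximal proper flat. -/
def Hyperplane (M : Matroid α) (H : Set α) : Prop :=
  M.IsFlat H ∧ H ≠ M.E ∧ ∀ F, M.IsFlat F → H ⊂ F → F = M.E

/-- A matroid is sparse paving if every nonspanning circuit is a hyperplane. -/
def SparsePaving (M : Matroid α) : Prop :=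
  ∀ C, Circuit M C → ¬ M.Spanning C → Hyperplane M C

/-- `M` has rank `r`: some base has exactly `r` elements. -/
def RankEq (M : Matroid α) (r : ℕ) : Prop := ∃ B, M.IsBase B ∧ B.ncard = r

/-- `N` is (isomorphic to) the rank-3 whirl `𝒲³`: the rank-3 sparse paving matroid on six
elements whose 3-element circuits are exactly the three listed triples. -/
def IsWhirl3 (N : Matroid α) : Prop :=
  ∃ a : Fin 6 → α, Function.Injective a ∧ N.E = Set.range a ∧
    RankEq N 3 ∧ SparsePaving N ∧
    ∀ C : Set α, (Circuit N C ∧ C.ncard = 3) ↔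
      (C = {a 0, a 1, a 2} ∨ C = {a 2, a 3, a 4} ∨ C = {a 4, a 5, a 0})

/-- `N` is (isomorphic to) `M(K₄)`: the rank-3 sparse paving matroid on six elements whose
3-element circuits are exactly the four listed triples. -/
def IsMK4 (N : Matroid α) : Prop :=
  ∃ a : Fin 6 → α, Function.Injective a ∧ N.E = Set.range a ∧
    RankEq N 3 ∧ SparsePaving N ∧
    ∀ C : Set α, (Circuit N C ∧ C.ncard = 3) ↔
      (C = {a 0, a 1, a 2} ∨ C = {a 2, a 3, a 4} ∨ C = {a 4, a 5, a 0} ∨ C = {a 1, a 3, a 5})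

/-- `M` has no minor isomorphic to `𝒲³` and no minor isomorphic to `M(K₄)`. -/
def WFree (M : Matroid α) : Prop :=
  (¬ ∃ N : Matroid α, IsMinor N M ∧ IsWhirl3 N) ∧
  (¬ ∃ N : Matroid α, IsMinor N M ∧ IsMK4 N)


section NoOrder

variable {M : Matroid α} {X C H T I B S H₁ H₂ : Set α} {x y w : α}

lemma exists_circuit_subset (hX : M.Dep X) (hfin : X.Finite) :
    ∃ C, C ⊆ X ∧ Circuit M C := by
  have hfin' : {Y | Y ⊆ X ∧ M.Dep Y}.Finite :=
    hfin.finite_subsets.subset (fun Y hY => hY.1)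
  obtain ⟨C, hC, hmin⟩ : ∃ C ∈ {Y | Y ⊆ X ∧ M.Dep Y}, ∀ D ∈ {Y | Y ⊆ X ∧ M.Dep Y},
      id D ≤ id C → id C = id D := by
    obtain ⟨C, hC⟩ := hfin'.exists_minimal ⟨X, Subset.rfl, hX⟩
    exact ⟨C, hC.prop, fun D hD hle => le_antisymm (hC.2 hD hle) hle⟩
  refine ⟨C, hC.1, hC.2, fun D hD => ?_⟩
  by_contra hind
  have hDE : D ⊆ M.E := hD.subset.trans hC.2.subset_ground
  have hdep : M.Dep D := dep_iff.2 ⟨hind, hDE⟩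
  have := hmin D ⟨hD.subset.trans hC.1, hdep⟩ hD.subset
  exact hD.ne this.symm

lemma small_indep (h3 : ∀ C, Circuit M C → C.ncard = 3 ∨ C.ncard = 4) (hE : M.E.Finite)
    (hX : X ⊆ M.E) (hcard : X.ncard ≤ 2) : M.Indep X := by
  by_contra h
  obtain ⟨C, hCX, hC⟩ := exists_circuit_subset (dep_iff.2 ⟨h, hX⟩) (hE.subset hX)
  have h1 : C.ncard ≤ X.ncard := ncard_le_ncard hCX (hE.subset hX)
  rcases h3 C hC with h' | h' <;> omega

lemma indep_base_of_ncard3 (hE : M.E.Finite) (hrk : RankEq M 3) (hI : M.Indep I)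
    (h3 : I.ncard = 3) : M.IsBase I := by
  obtain ⟨B0, hB0, hB0c⟩ := hrk
  obtain ⟨B, hB, hIB⟩ := hI.exists_isBase_superset
  have hBfin : B.Finite := hE.subset hB.subset_ground
  have hBc : B.ncard = 3 := by rw [hB.ncard_eq_ncard_of_isBase hB0, hB0c]
  have : I = B := eq_of_subset_of_ncard_le hIB (by omega) hBfin
  rwa [this]

lemma base_ncard3 (hE : M.E.Finite) (hrk : RankEq M 3) (hB : M.IsBase B) : B.ncard = 3 := by
  obtain ⟨B0, hB0, hB0c⟩ := hrk
  rw [hB.ncard_eq_ncard_of_isBase hB0, hB0c]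

lemma dep_of_subset_hyperplane (hE : M.E.Finite) (hrk : RankEq M 3)
    (hH : Hyperplane M H) (hT : T ⊆ H) (h3 : T.ncard = 3) : M.Dep T := by
  rw [← not_indep_iff (hT.trans hH.1.subset_ground)]
  intro hind
  have hBase := indep_base_of_ncard3 hE hrk hind h3
  have h1 : M.E ⊆ H := by
    have h2 : M.closure T ⊆ M.closure H := M.closure_subset_closure hT
    rwa [hBase.closure_eq, hH.1.closure] at h2
  exact hH.2.1 (subset_antisymm hH.1.subset_ground h1)

lemma closure_flat' (M : Matroid α) (X : Set α) : M.IsFlat (M.closure X) := by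
  rw [closure_eq_subtypeClosure]
  exact isClosed_iff_isFlat.1 (M.subtypeClosure.isClosed_closure _)

/-- A hyperplane containing two distinct points equals the closure of the pair. -/
lemma hyperplane_eq_closure_pair (h3 : ∀ C, Circuit M C → C.ncard = 3 ∨ C.ncard = 4)
    (hE : M.E.Finite) (hrk : RankEq M 3) (hH : Hyperplane M H)
    (hx : x ∈ H) (hy : y ∈ H) (hxy : x ≠ y) : H = M.closure {x, y} := by
  have hpairE : ({x, y} : Set α) ⊆ M.E := by
    intro t ht; rcases ht with rfl | rfl
    exacts [hH.1.subset_ground hx, hH.1.subset_ground hy]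
  have hpair : M.Indep {x, y} := small_indep h3 hE hpairE (by rw [ncard_pair hxy])
  have hsub : M.closure {x, y} ⊆ H := by
    have := M.closure_subset_closure (show ({x, y} : Set α) ⊆ H by
      intro t ht; rcases ht with rfl | rfl; exacts [hx, hy])
    rwa [hH.1.closure] at this
  refine subset_antisymm ?_ hsub
  intro w hw
  by_contra hwcl
  have hwE : w ∈ M.E := hH.1.subset_ground hw
  have hwxy : w ∉ ({x, y} : Set α) := fun h => hwcl (M.subset_closure _ hpairE h)
  have hind : M.Indep (insert w {x, y}) :=
    (hpair.insert_indep_iff_of_notMem hwxy).2 ⟨hwE, hwcl⟩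
  have hbase : M.IsBase (insert w {x, y}) := by
    refine indep_base_of_ncard3 hE hrk hind ?_
    rw [ncard_insert_of_notMem hwxy (hE.subset hpairE), ncard_pair hxy]
  have hsub3 : insert w {x, y} ⊆ H := insert_subset hw (by
    intro t ht; rcases ht with rfl | rfl; exacts [hx, hy])
  have : M.E ⊆ H := by
    have h2 := M.closure_subset_closure hsub3
    rwa [hbase.closure_eq, hH.1.closure] at h2
  exact hH.2.1 (subset_antisymm hH.1.subset_ground this)

lemma hyperplane_unique (h3 : ∀ C, Circuit M C → C.ncard = 3 ∨ C.ncard = 4)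
    (hE : M.E.Finite) (hrk : RankEq M 3) (hH₁ : Hyperplane M H₁) (hH₂ : Hyperplane M H₂)
    (hxy : x ≠ y) (hx1 : x ∈ H₁) (hy1 : y ∈ H₁) (hx2 : x ∈ H₂) (hy2 : y ∈ H₂) : H₁ = H₂ := by
  rw [hyperplane_eq_closure_pair h3 hE hrk hH₁ hx1 hy1 hxy,
    hyperplane_eq_closure_pair h3 hE hrk hH₂ hx2 hy2 hxy]

lemma circuit3_subset_closure_pair (hC : Circuit M C) (h3 : C.ncard = 3) (hE : M.E.Finite)
    (hx : x ∈ C) (hy : y ∈ C) (hxy : x ≠ y) : C ⊆ M.closure {x, y} := by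
  have hCE : C ⊆ M.E := hC.1.subset_ground
  have hCfin : C.Finite := hE.subset hCE
  have hpairE : ({x, y} : Set α) ⊆ M.E := by
    intro t ht; rcases ht with rfl | rfl; exacts [hCE hx, hCE hy]
  intro t ht
  by_cases htxy : t ∈ ({x, y} : Set α)
  · exact M.subset_closure _ hpairE htxy
  · have hCeq : C = insert t {x, y} := by
      refine (eq_of_subset_of_ncard_le ?_ ?_ hCfin).symm
      · exact insert_subset ht (by intro u hu; rcases hu with rfl | rfl; exacts [hx, hy])
      · rw [h3, ncard_insert_of_notMem htxy (hE.subset hpairE), ncard_pair hxy]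
    have hpair : M.Indep {x, y} := hC.2 _ (by
      rw [hCeq]; exact ssubset_insert htxy)
    have hdep : M.Dep (insert t {x, y}) := hCeq ▸ hC.1
    exact ((hpair.insert_dep_iff).1 hdep).1

/-- The closure of an independent pair is a hyperplane (rank 3, finite). -/
lemma closure_pair_hyperplane (hE : M.E.Finite) (hrk : RankEq M 3)
    (hpair : M.Indep {x, y}) (hxy : x ≠ y) : Hyperplane M (M.closure {x, y}) := by
  have hpairE : ({x, y} : Set α) ⊆ M.E := hpair.subset_ground
  have hflat : M.IsFlat (M.closure {x, y}) := closure_flat' M _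
  refine ⟨hflat, ?_, ?_⟩
  · intro h
    have hsp : M.Spanning {x, y} := by
      rw [spanning_iff_closure_eq hpairE]; exact h
    obtain ⟨B, hB, hBsub⟩ := hsp.exists_isBase_subset
    have := base_ncard3 hE hrk hB
    have h2 : B.ncard ≤ 2 := le_trans (ncard_le_ncard hBsub (hE.subset hpairE))
      (by rw [ncard_pair hxy])
    omega
  · intro F hF hssub
    obtain ⟨w, hwF, hwcl⟩ := exists_of_ssubset hssub
    have hwE : w ∈ M.E := hF.subset_ground hwF
    have hwxy : w ∉ ({x, y} : Set α) := fun h => hwcl (M.subset_closure _ hpairE h)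
    have hind : M.Indep (insert w {x, y}) :=
      (hpair.insert_indep_iff_of_notMem hwxy).2 ⟨hwE, hwcl⟩
    have hbase : M.IsBase (insert w {x, y}) := by
      refine indep_base_of_ncard3 hE hrk hind ?_
      rw [ncard_insert_of_notMem hwxy (hE.subset hpairE), ncard_pair hxy]
    have hsub3 : insert w {x, y} ⊆ F := insert_subset hwF
      ((M.subset_closure _ hpairE).trans hssub.subset)
    have : M.E ⊆ F := by
      have h2 := M.closure_subset_closure hsub3
      rwa [hbase.closure_eq, hF.closure] at h2
    exact subset_antisymm hF.subset_ground this


variable {M : Matroid α} {S C D F B I X W : Set α}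

lemma contract_ground (M : Matroid α) (C : Set α) : (Contract M C).E = M.E \ C := rfl

lemma contract_empty (M : Matroid α) : Contract M ∅ = M := by
  unfold Contract Delete
  rw [diff_empty, restrict_ground_eq_self, dual_dual]

lemma restrict_isMinor (hS : S ⊆ M.E) : IsMinor (M ↾ S) M := by
  refine ⟨∅, M.E \ S, ?_⟩
  rw [contract_empty]
  unfold Delete
  rw [diff_diff_cancel_left hS]

lemma restrict_circuit_iff (hS : S ⊆ M.E) :
    Circuit (M ↾ S) C ↔ Circuit M C ∧ C ⊆ S := by
  constructor
  · rintro ⟨hdep, hmin⟩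
    obtain ⟨hnind, hCS⟩ := restrict_dep_iff.1 hdep
    exact ⟨⟨dep_iff.2 ⟨hnind, hCS.trans hS⟩,
      fun D hD => ((restrict_indep_iff).1 (hmin D hD)).1⟩, hCS⟩
  · rintro ⟨⟨hdep, hmin⟩, hCS⟩
    refine ⟨restrict_dep_iff.2 ⟨dep_iff.1 hdep |>.1, hCS⟩, fun D hD => ?_⟩
    exact restrict_indep_iff.2 ⟨hmin D hD, hD.subset.trans hCS⟩

lemma basis_of_base_subset (hB : M.IsBase B) (hBS : B ⊆ S) (hS : S ⊆ M.E) : M.IsBasis B S :=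
  hB.indep.isBasis_of_subset_of_subset_closure hBS (by rw [hB.closure_eq]; exact hS)

lemma flat_restrict (hS : S ⊆ M.E) (hF : M.IsFlat F) : (M ↾ S).IsFlat (F ∩ S) := by
  constructor
  · intro I X hIF hIX
    rw [isBasis_restrict_iff hS] at hIF hIX
    obtain ⟨hIF, -⟩ := hIF
    obtain ⟨hIX, hXS⟩ := hIX
    refine subset_inter ?_ hXS
    refine (hIX.subset_closure).trans ?_
    have h1 : M.closure I ⊆ M.closure F :=
      (M.closure_subset_closure (hIF.subset.trans inter_subset_left))
    rwa [hF.closure] at h1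
  · rw [restrict_ground_eq]
    exact inter_subset_right

/-- From the dual: independence in a contraction implies independence. -/
lemma contract_indep_of_indep (h : (Contract M C).Indep I) : M.Indep I := by
  have hRE : M✶.E \ C ⊆ M.E := diff_subset
  obtain ⟨hIR, Bb, hBb, hdisj⟩ := dual_indep_iff_exists'.1 h
  have hIR' : I ⊆ M✶.E \ C := hIR
  have hBb' : M✶.IsBasis Bb (M✶.E \ C) := (isBase_restrict_iff (M := M✶) hRE).1 hBb
  obtain ⟨B', hB', hBbB'⟩ := hBb'.indep.exists_isBase_superset
  have hint : Bb = B' ∩ (M✶.E \ C) :=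
    hBb'.eq_of_subset_indep (hB'.indep.subset inter_subset_left)
      (subset_inter hBbB' hBb'.subset) inter_subset_right
  have hIB' : Disjoint I B' := disjoint_left.2 fun t htI htB' =>
    (disjoint_left.1 hdisj) htI (by rw [hint]; exact ⟨htB', hIR' htI⟩)
  exact hB'.compl_isBase_of_dual.indep.subset (subset_diff.2 ⟨hIR'.trans hRE, hIB'⟩)

/-- If the contraction has a base whose size equals the rank of `M`, then every independent
subset of the contraction's ground set is independent in the contraction. -/
lemma contract_indep_of_full_rank (hE : M.E.Finite) (hrk : RankEq M 3) {B'' : Set α}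
    (hB'' : (Contract M C).IsBase B'') (h3 : B''.ncard = 3)
    (hX : M.Indep X) (hXR : X ⊆ M.E \ C) : (Contract M C).Indep X := by
  classical
  have hRR : (M✶.E \ C : Set α) = M.E \ C := by rw [dual_ground]
  have hRE : M✶.E \ C ⊆ M.E := diff_subset
  have hRfin : (M✶.E \ C).Finite := hE.subset hRE
  have hB''R : B'' ⊆ M✶.E \ C := hB''.subset_ground
  have hKbase : (M✶ ↾ (M✶.E \ C)).IsBase ((M✶.E \ C) \ B'') :=
    (dual_isBase_iff (M := M✶ ↾ (M✶.E \ C)) (B := B'') hB''R).1 hB''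
  have hJ : M✶.IsBasis ((M✶.E \ C) \ B'') (M✶.E \ C) := (isBase_restrict_iff (M := M✶) hRE).1 hKbase
  obtain ⟨Bs, hBs, hJBs⟩ := hJ.indep.exists_isBase_superset
  have hint : (M✶.E \ C) \ B'' = Bs ∩ (M✶.E \ C) :=
    hJ.eq_of_subset_indep (hBs.indep.subset inter_subset_left)
      (subset_inter hJBs hJ.subset) inter_subset_right
  have hBn : M.IsBase (M.E \ Bs) := hBs.compl_isBase_of_dual
  have hBnc : (M.E \ Bs).ncard = 3 := by
    obtain ⟨B0, hB0, hB0c⟩ := hrk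
    rw [hBn.ncard_eq_ncard_of_isBase hB0, hB0c]
  have hB''Bn : B'' ⊆ M.E \ Bs := by
    intro t ht
    refine ⟨hRE (hB''R ht), fun htBs => ?_⟩
    have h2 : t ∈ Bs ∩ (M✶.E \ C) := ⟨htBs, hB''R ht⟩
    rw [← hint] at h2
    exact h2.2 ht
  have hBnfin : (M.E \ Bs).Finite := hE.subset diff_subset
  have hBnB'' : M.E \ Bs = B'' := (eq_of_subset_of_ncard_le hB''Bn (by omega) hBnfin).symm
  obtain ⟨Bh, hBh, hXBh, hBhsub⟩ := hX.exists_isBase_subset_union_isBase (hBnB'' ▸ hBn)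
  have hBhR : Bh ⊆ M✶.E \ C := hBhsub.trans (union_subset (by rwa [hRR]) hB''R)
  have hBhc : Bh.ncard = 3 := by
    obtain ⟨B0, hB0, hB0c⟩ := hrk
    rw [hBh.ncard_eq_ncard_of_isBase hB0, hB0c]
  have hRBh_indep : M✶.Indep ((M✶.E \ C) \ Bh) :=
    (hBh.compl_isBase_dual).indep.subset (fun t ht => ⟨hRE ht.1, ht.2⟩)
  obtain ⟨Bb, hBbB, hBb⟩ := hRBh_indep.subset_isBasis_of_subset diff_subset hRE
  have hcard1 : ((M✶.E \ C) \ Bh).ncard = ((M✶.E \ C) \ B'').ncard := by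
    rw [ncard_diff hBhR (hRfin.subset hBhR), ncard_diff hB''R (hRfin.subset hB''R), hBhc, h3]
  have hcard2 : Bb.ncard = ((M✶.E \ C) \ B'').ncard := by
    rw [ncard_def, hBbB.encard_eq_encard hJ, ← ncard_def]
  have hBbeq : Bb = (M✶.E \ C) \ Bh :=
    (eq_of_subset_of_ncard_le hBb (by omega) (hRfin.subset hBbB.subset)).symm
  refine dual_indep_iff_exists'.2 ⟨(by show X ⊆ M✶.E \ C; rwa [hRR]), (M✶.E \ C) \ Bh, ?_, ?_⟩
  · exact (isBase_restrict_iff (M := M✶) hRE).2 (hBbeq ▸ hBbB)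
  · exact (disjoint_sdiff_right (s := Bh)).mono_left hXBh

lemma base_of_restrict_base (hE : M.E.Finite) (hrk : RankEq M 3) (hSE : S ⊆ M.E)
    (hB : M.IsBase B) (hBS : B ⊆ S) : (M ↾ S).IsBase B :=
  (isBase_restrict_iff hSE).2 (basis_of_base_subset hB hBS hSE)

/-- The trace of a hyperplane on a restriction is a hyperplane of the restriction (rank 3). -/
lemma hyperplane_restrict (h3 : ∀ C, Circuit M C → C.ncard = 3 ∨ C.ncard = 4)
    (hE : M.E.Finite) (hrk : RankEq M 3) (hSE : S ⊆ M.E) (hW : Hyperplane M W)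
    {u v : α} (hu : u ∈ W ∩ S) (hv : v ∈ W ∩ S) (huv : u ≠ v) (hne : W ∩ S ≠ S) :
    Hyperplane (M ↾ S) (W ∩ S) := by
  refine ⟨flat_restrict hSE hW.1, by rwa [restrict_ground_eq], ?_⟩
  intro F hF hssub
  obtain ⟨w, hwF, hwWS⟩ := exists_of_ssubset hssub
  have hFS : F ⊆ S := by rw [← restrict_ground_eq (M := M) (R := S)]; exact hF.subset_ground
  have hwS : w ∈ S := hFS hwF
  have hwW : w ∉ W := fun h => hwWS ⟨h, hwS⟩
  have hWcl : W = M.closure {u, v} :=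
    hyperplane_eq_closure_pair h3 hE hrk hW hu.1 hv.1 huv
  have hpairE : ({u, v} : Set α) ⊆ M.E := by
    intro t ht; rcases ht with rfl | rfl
    exacts [hW.1.subset_ground hu.1, hW.1.subset_ground hv.1]
  have hpair : M.Indep {u, v} := small_indep h3 hE hpairE (by rw [ncard_pair huv])
  have hwuv : w ∉ ({u, v} : Set α) := by
    rintro (rfl | rfl); exacts [hwW hu.1, hwW hv.1]
  have hind : M.Indep (insert w {u, v}) :=
    (hpair.insert_indep_iff_of_notMem hwuv).2 ⟨hSE hwS, fun h => hwW (hWcl ▸ h)⟩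
  have hbase : M.IsBase (insert w {u, v}) := by
    refine indep_base_of_ncard3 hE hrk hind ?_
    rw [ncard_insert_of_notMem hwuv (hE.subset hpairE), ncard_pair huv]
  have hBF : insert w {u, v} ⊆ F := by
    refine insert_subset hwF ?_
    intro t ht; rcases ht with rfl | rfl
    exacts [hssub.subset ⟨hu.1, hu.2⟩, hssub.subset ⟨hv.1, hv.2⟩]
  have hBS : insert w {u, v} ⊆ S := by
    refine insert_subset hwS ?_
    intro t ht; rcases ht with rfl | rfl; exacts [hu.2, hv.2]
  have hBindN : (M ↾ S).Indep (insert w {u, v}) := restrict_indep_iff.2 ⟨hind, hBS⟩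
  obtain ⟨I, hIbasis, hBI⟩ := hBindN.subset_isBasis_of_subset hBF
    (by rw [restrict_ground_eq]; exact hFS)
  have hIM : M.Indep I := (restrict_indep_iff.1 hIbasis.indep).1
  have hIB : insert w {u, v} = I := hbase.eq_of_subset_indep hIM hBI
  have hbasisS : (M ↾ S).IsBasis (insert w {u, v}) S :=
    (isBasis_restrict_iff hSE).2 ⟨basis_of_base_subset hbase hBS hSE, Subset.rfl⟩
  have hSF : S ⊆ F := hF.subset_of_isBasis_of_isBasis (hIB ▸ hIbasis) hbasisS
  rw [restrict_ground_eq]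
  exact subset_antisymm hFS hSF


end NoOrder

end Paper

namespace Paper

variable {α : Type*} [LinearOrder α]

/-- A rank-3 paving matroid: every circuit has 3 or 4 elements. -/
def Paving3 (M : Matroid α) : Prop :=
  RankEq M 3 ∧ ∀ C, Circuit M C → C.ncard = 3 ∨ C.ncard = 4

/-- `T` is a consecutive triple of `H`: a 3-element subset of `H` such that no element of
`H \ T` lies strictly between two elements of `T`. -/
def ConsecTriple (H T : Set α) : Prop :=
  T ⊆ H ∧ T.ncard = 3 ∧ ∀ h ∈ H, h ∉ T → ∀ v ∈ T, ∀ v' ∈ T, ¬ (v < h ∧ h < v')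

/-- `𝒱^k(M)` (`k ∈ {0,1}`): the union over all hyperplanes `H` of `M` of the even-indexed
(`k = 0`) resp. odd-indexed (`k = 1`) consecutive triples of `H`; the index of a consecutive
triple `T` of `H` in the induced linear order on `𝒱(H)` is the number of elements of `H`
strictly below all of `T`. -/
def Vk (M : Matroid α) (k : ℕ) : Set (Set α) :=
  {T | ∃ H, Hyperplane M H ∧ ConsecTriple H T ∧
    {h ∈ H | ∀ t ∈ T, h < t}.ncard % 2 = k}


variable {H T T₁ T₂ T₃ : Set α} {x y : α}

noncomputable def rnk (H : Set α) (x : α) : ℕ := {h ∈ H | h < x}.ncard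

noncomputable def idx (H T : Set α) : ℕ := {h ∈ H | ∀ t ∈ T, h < t}.ncard

lemma sorted_of_ncard_three (h : T.ncard = 3) :
    ∃ a b c, a < b ∧ b < c ∧ T = {a, b, c} := by
  obtain ⟨x, y, z, hxy, hxz, hyz, rfl⟩ := ncard_eq_three.1 h
  have perm : ∀ u v w : α, ({u, v, w} : Set α) = {u, w, v} ∧ ({u, v, w} : Set α) = {v, u, w} := by
    intro u v w
    constructor <;> · ext t; simp; tauto
  rcases lt_trichotomy x y with h1 | h1 | h1
  · rcases lt_trichotomy y z with h2 | h2 | h2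
    · exact ⟨x, y, z, h1, h2, rfl⟩
    · exact absurd h2 hyz
    · rcases lt_trichotomy x z with h3 | h3 | h3
      · exact ⟨x, z, y, h3, h2, (perm x y z).1⟩
      · exact absurd h3 hxz
      · exact ⟨z, x, y, h3, h1, by rw [(perm x y z).1, (perm x z y).2]⟩
  · exact absurd h1 hxy
  · rcases lt_trichotomy x z with h2 | h2 | h2
    · exact ⟨y, x, z, h1, h2, (perm x y z).2⟩
    · exact absurd h2 hxz
    · rcases lt_trichotomy y z with h3 | h3 | h3
      · exact ⟨y, z, x, h3, h2, by rw [(perm x y z).2, (perm y x z).1]⟩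
      · exact absurd h3 hyz
      · exact ⟨z, y, x, h3, h1, by rw [(perm x y z).2, (perm y x z).1, (perm y z x).2]⟩

lemma rnk_lt_rnk (hH : H.Finite) (hx : x ∈ H) (hxy : x < y) : rnk H x < rnk H y := by
  apply ncard_lt_ncard _ (hH.subset (sep_subset _ _))
  constructor
  · exact fun h hh => ⟨hh.1, hh.2.trans hxy⟩
  · exact fun hsub => absurd (hsub ⟨hx, hxy⟩).2 (lt_irrefl x)

lemma rnk_injOn (hH : H.Finite) (hx : x ∈ H) (hy : y ∈ H) (h : rnk H x = rnk H y) : x = y := by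
  rcases lt_trichotomy x y with h1 | h1 | h1
  · exact absurd h (Nat.ne_of_lt (rnk_lt_rnk hH hx h1))
  · exact h1
  · exact absurd h.symm (Nat.ne_of_lt (rnk_lt_rnk hH hy h1))

/-- For a consecutive triple with sorted elements a < b < c, the ranks are idx, idx+1, idx+2. -/
lemma consec_rnk (hH : H.Finite) (hT : ConsecTriple H T) {a b c : α}
    (hab : a < b) (hbc : b < c) (hTeq : T = {a, b, c}) :
    rnk H a = idx H T ∧ rnk H b = idx H T + 1 ∧ rnk H c = idx H T + 2 := by
  obtain ⟨hTH, hc3, hcons⟩ := hT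
  have haH : a ∈ H := hTH (by rw [hTeq]; left; rfl)
  have hbH : b ∈ H := hTH (by rw [hTeq]; right; left; rfl)
  have hcH : c ∈ H := hTH (by rw [hTeq]; right; right; rfl)
  have ha : rnk H a = idx H T := by
    unfold rnk idx
    congr 1
    ext h
    simp only [mem_setOf_eq, mem_sep_iff]
    constructor
    · rintro ⟨hh, hlt⟩
      refine ⟨hh, fun t ht => ?_⟩
      rw [hTeq] at ht
      rcases ht with rfl | rfl | rfl
      exacts [hlt, hlt.trans hab, hlt.trans (hab.trans hbc)]
    · rintro ⟨hh, hlt⟩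
      exact ⟨hh, hlt a (by rw [hTeq]; left; rfl)⟩
  have hstep : ∀ u v : α, u ∈ H → v ∈ H → u < v →
      (∀ h ∈ H, ¬ (u < h ∧ h < v)) →
      {h ∈ H | h < v} = insert u {h ∈ H | h < u} := by
    intro u v huH hvH huv hno
    ext h
    simp only [mem_insert_iff, mem_sep_iff]
    constructor
    · rintro ⟨hh, hlt⟩
      rcases eq_or_ne h u with rfl | hne
      · exact Or.inl rfl
      · rcases lt_trichotomy h u with h2 | h2 | h2
        · exact Or.inr ⟨hh, h2⟩
        · exact Or.inl h2
        · exact absurd ⟨h2, hlt⟩ (hno h hh)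
    · rintro (rfl | ⟨hh, hlt⟩)
      · exact ⟨huH, huv⟩
      · exact ⟨hh, hlt.trans huv⟩
  have hnoab : ∀ h ∈ H, ¬ (a < h ∧ h < b) := by
    intro h hh ⟨h1, h2⟩
    by_cases hhT : h ∈ T
    · rw [hTeq] at hhT
      rcases hhT with rfl | rfl | rfl
      · exact lt_irrefl _ h1
      · exact lt_irrefl _ h2
      · exact absurd hbc (lt_asymm h2)
    · exact hcons h hh hhT a (by rw [hTeq]; left; rfl) b (by rw [hTeq]; right; left; rfl) ⟨h1, h2⟩
  have hnobc : ∀ h ∈ H, ¬ (b < h ∧ h < c) := by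
    intro h hh ⟨h1, h2⟩
    by_cases hhT : h ∈ T
    · rw [hTeq] at hhT
      rcases hhT with rfl | rfl | rfl
      · exact lt_irrefl _ (h1.trans hab)
      · exact lt_irrefl _ h1
      · exact lt_irrefl _ h2
    · exact hcons h hh hhT b (by rw [hTeq]; right; left; rfl) c
        (by rw [hTeq]; right; right; rfl) ⟨h1, h2⟩
  have hb : rnk H b = rnk H a + 1 := by
    unfold rnk
    rw [hstep a b haH hbH hab hnoab, ncard_insert_of_notMem (by simp)
      (hH.subset (sep_subset _ _))]
  have hc : rnk H c = rnk H b + 1 := by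
    unfold rnk
    rw [hstep b c hbH hcH hbc hnobc, ncard_insert_of_notMem (by simp)
      (hH.subset (sep_subset _ _))]
  exact ⟨ha, by omega, by omega⟩

lemma rnk_bounds (hH : H.Finite) (hT : ConsecTriple H T) {u : α} (hu : u ∈ T) :
    idx H T ≤ rnk H u ∧ rnk H u ≤ idx H T + 2 := by
  obtain ⟨a, b, c, hab, hbc, hTeq⟩ := sorted_of_ncard_three hT.2.1
  obtain ⟨ha, hb, hc⟩ := consec_rnk hH hT hab hbc hTeq
  rw [hTeq] at hu
  rcases hu with rfl | rfl | rfl <;> omega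

lemma idx_ne_of_ne (hH : H.Finite) (h1 : ConsecTriple H T₁) (h2 : ConsecTriple H T₂)
    (hne : T₁ ≠ T₂) : idx H T₁ ≠ idx H T₂ := by
  intro heq
  obtain ⟨a1, b1, c1, hab1, hbc1, hTeq1⟩ := sorted_of_ncard_three h1.2.1
  obtain ⟨a2, b2, c2, hab2, hbc2, hTeq2⟩ := sorted_of_ncard_three h2.2.1
  obtain ⟨ha1, hb1, hc1⟩ := consec_rnk hH h1 hab1 hbc1 hTeq1
  obtain ⟨ha2, hb2, hc2⟩ := consec_rnk hH h2 hab2 hbc2 hTeq2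
  have mem1 : ∀ t, t ∈ ({a1, b1, c1} : Set α) → t ∈ H := fun t ht => h1.1 (hTeq1 ▸ ht)
  have mem2 : ∀ t, t ∈ ({a2, b2, c2} : Set α) → t ∈ H := fun t ht => h2.1 (hTeq2 ▸ ht)
  have ea : a1 = a2 := rnk_injOn hH (mem1 a1 (by left; rfl)) (mem2 a2 (by left; rfl)) (by omega)
  have eb : b1 = b2 := rnk_injOn hH (mem1 b1 (by right; left; rfl))
    (mem2 b2 (by right; left; rfl)) (by omega)
  have ec : c1 = c2 := rnk_injOn hH (mem1 c1 (by right; right; rfl))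
    (mem2 c2 (by right; right; rfl)) (by omega)
  exact hne (by rw [hTeq1, hTeq2, ea, eb, ec])

/-- Two distinct consecutive triples of `H` with the same index parity share at most one
element. -/
lemma consec_parity (hH : H.Finite) (h1 : ConsecTriple H T₁) (h2 : ConsecTriple H T₂)
    (hne : T₁ ≠ T₂) (hpar : idx H T₁ % 2 = idx H T₂ % 2) : (T₁ ∩ T₂).ncard ≤ 1 := by
  by_contra hcard
  have hfin : (T₁ ∩ T₂).Finite := hH.subset ((inter_subset_left).trans h1.1)
  obtain ⟨u, v, hu, hv, huv⟩ := (one_lt_ncard_iff hfin).1 (by omega)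
  have hru : rnk H u ≠ rnk H v := fun h => huv (rnk_injOn hH (h1.1 hu.1) (h1.1 hv.1) h)
  have b1u := rnk_bounds hH h1 hu.1
  have b1v := rnk_bounds hH h1 hv.1
  have b2u := rnk_bounds hH h2 hu.2
  have b2v := rnk_bounds hH h2 hv.2
  have hne' := idx_ne_of_ne hH h1 h2 hne
  omega

/-- Three distinct consecutive triples of `H` with equal index parities cannot pairwise
intersect. -/
lemma consec_three (hH : H.Finite) (h1 : ConsecTriple H T₁) (h2 : ConsecTriple H T₂)
    (h3 : ConsecTriple H T₃) (h12 : T₁ ≠ T₂) (h13 : T₁ ≠ T₃) (h23 : T₂ ≠ T₃)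
    (p12 : idx H T₁ % 2 = idx H T₂ % 2) (p13 : idx H T₁ % 2 = idx H T₃ % 2)
    (i12 : (T₁ ∩ T₂).Nonempty) (i13 : (T₁ ∩ T₃).Nonempty) (i23 : (T₂ ∩ T₃).Nonempty) :
    False := by
  obtain ⟨u, hu⟩ := i12
  obtain ⟨v, hv⟩ := i13
  obtain ⟨w, hw⟩ := i23
  have b1 := rnk_bounds hH h1 hu.1
  have b2 := rnk_bounds hH h2 hu.2
  have b3 := rnk_bounds hH h1 hv.1
  have b4 := rnk_bounds hH h3 hv.2
  have b5 := rnk_bounds hH h2 hw.1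
  have b6 := rnk_bounds hH h3 hw.2
  have n12 := idx_ne_of_ne hH h1 h2 h12
  have n13 := idx_ne_of_ne hH h1 h3 h13
  have n23 := idx_ne_of_ne hH h2 h3 h23
  omega




lemma vk_inter_le_one {M : Matroid α} {k : ℕ} {T T' H H' : Set α}
    (h3 : ∀ C, Circuit M C → C.ncard = 3 ∨ C.ncard = 4) (hE : M.E.Finite) (hrk : RankEq M 3)
    (hH : Hyperplane M H) (hH' : Hyperplane M H') (hct : ConsecTriple H T)
    (hct' : ConsecTriple H' T') (hp : idx H T % 2 = k) (hp' : idx H' T' % 2 = k)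
    (hne : T ≠ T') : (T ∩ T').ncard ≤ 1 := by
  by_contra hc
  have hHfin : H.Finite := hE.subset hH.1.subset_ground
  have hfin : (T ∩ T').Finite := hHfin.subset (inter_subset_left.trans hct.1)
  obtain ⟨a, b, ha, hb, hab⟩ := (one_lt_ncard_iff hfin).1 (by omega)
  have hHH : H = H' := hyperplane_unique h3 hE hrk hH hH' hab (hct.1 ha.1) (hct.1 hb.1)
    (hct'.1 ha.2) (hct'.1 hb.2)
  subst hHH
  exact absurd (consec_parity hHfin hct hct' hne (by omega)) (by omega)

lemma circuit_of_subset_hyperplane {M : Matroid α} {H T : Set α}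
    (h3 : ∀ C, Circuit M C → C.ncard = 3 ∨ C.ncard = 4) (hE : M.E.Finite) (hrk : RankEq M 3)
    (hH : Hyperplane M H) (hT : T ⊆ H) (hT3 : T.ncard = 3) : Circuit M T := by
  refine ⟨dep_of_subset_hyperplane hE hrk hH hT hT3, fun D hD => ?_⟩
  have hDfin : T.Finite := hE.subset (hT.trans hH.1.subset_ground)
  have := ncard_lt_ncard hD hDfin
  exact small_indep h3 hE ((hD.subset.trans hT).trans hH.1.subset_ground) (by omega)

set_option maxHeartbeats 2000000 in
/-- The core lemma: three distinct members of `𝒱^k(M)` cannot fit in a common 6-element set. -/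
lemma core {M : Matroid α} (hE : M.E.Finite) (hM : Paving3 M) (hfree : WFree M) {k : ℕ}
    {S T₁ T₂ T₃ : Set α} (hS : S ⊆ M.E) (hS6 : S.ncard = 6)
    (h1 : T₁ ∈ Vk M k) (h2 : T₂ ∈ Vk M k) (h3 : T₃ ∈ Vk M k)
    (hsub1 : T₁ ⊆ S) (hsub2 : T₂ ⊆ S) (hsub3 : T₃ ⊆ S)
    (h12 : T₁ ≠ T₂) (h13 : T₁ ≠ T₃) (h23 : T₂ ≠ T₃) : False := by
  obtain ⟨hrk, hcs⟩ := hM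
  obtain ⟨H₁, hH₁, hct₁, hpar₁⟩ := h1
  obtain ⟨H₂, hH₂, hct₂, hpar₂⟩ := h2
  obtain ⟨H₃, hH₃, hct₃, hpar₃⟩ := h3
  have hp1 : idx H₁ T₁ % 2 = k := hpar₁
  have hp2 : idx H₂ T₂ % 2 = k := hpar₂
  have hp3 : idx H₃ T₃ % 2 = k := hpar₃
  have hT13 : T₁.ncard = 3 := hct₁.2.1
  have hT23 : T₂.ncard = 3 := hct₂.2.1
  have hT33 : T₃.ncard = 3 := hct₃.2.1
  have hSfin : S.Finite := hE.subset hS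
  have f1 : T₁.Finite := hSfin.subset hsub1
  have f2 : T₂.Finite := hSfin.subset hsub2
  have f3 : T₃.Finite := hSfin.subset hsub3
  have n12 : (T₁ ∩ T₂).ncard ≤ 1 :=
    vk_inter_le_one hcs hE hrk hH₁ hH₂ hct₁ hct₂ hp1 hp2 h12
  have n13 : (T₁ ∩ T₃).ncard ≤ 1 :=
    vk_inter_le_one hcs hE hrk hH₁ hH₃ hct₁ hct₃ hp1 hp3 h13
  have n23 : (T₂ ∩ T₃).ncard ≤ 1 :=
    vk_inter_le_one hcs hE hrk hH₂ hH₃ hct₂ hct₃ hp2 hp3 h23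
  -- counting
  have u12 : (T₁ ∪ T₂).ncard + (T₁ ∩ T₂).ncard = 6 := by
    rw [ncard_union_add_ncard_inter _ _ f1 f2, hT13, hT23]
  have u123 : (T₁ ∪ T₂ ∪ T₃).ncard + ((T₁ ∪ T₂) ∩ T₃).ncard = (T₁ ∪ T₂).ncard + 3 := by
    rw [ncard_union_add_ncard_inter _ _ (f1.union f2) f3, hT33]
  have hdist : (T₁ ∪ T₂) ∩ T₃ = (T₁ ∩ T₃) ∪ (T₂ ∩ T₃) := union_inter_distrib_right _ _ _
  have hle2 : ((T₁ ∩ T₃) ∪ (T₂ ∩ T₃)).ncard ≤ (T₁ ∩ T₃).ncard + (T₂ ∩ T₃).ncard :=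
    ncard_union_le _ _
  have hUsub : T₁ ∪ T₂ ∪ T₃ ⊆ S := union_subset (union_subset hsub1 hsub2) hsub3
  have hUle : (T₁ ∪ T₂ ∪ T₃).ncard ≤ 6 := hS6 ▸ ncard_le_ncard hUsub hSfin
  have huint : ((T₁ ∩ T₃) ∪ (T₂ ∩ T₃)).ncard + ((T₁ ∩ T₃) ∩ (T₂ ∩ T₃)).ncard
      = (T₁ ∩ T₃).ncard + (T₂ ∩ T₃).ncard :=
    ncard_union_add_ncard_inter _ _ (f1.subset inter_subset_left) (f2.subset inter_subset_left)
  rw [hdist] at u123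
  -- all the intersection sizes are forced
  have e12 : (T₁ ∩ T₂).ncard = 1 := by omega
  have e13 : (T₁ ∩ T₃).ncard = 1 := by omega
  have e23 : (T₂ ∩ T₃).ncard = 1 := by omega
  have etriple : ((T₁ ∩ T₃) ∩ (T₂ ∩ T₃)).ncard = 0 := by omega
  have htripl : (T₁ ∩ T₃) ∩ (T₂ ∩ T₃) = ∅ :=
    (ncard_eq_zero ((f1.subset inter_subset_left).subset inter_subset_left)).1 etriple
  have hU6 : (T₁ ∪ T₂ ∪ T₃).ncard = 6 := by omega
  have hUS : T₁ ∪ T₂ ∪ T₃ = S := eq_of_subset_of_ncard_le hUsub (by omega) hSfin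
  obtain ⟨p, hp⟩ := ncard_eq_one.1 e12
  obtain ⟨q, hq⟩ := ncard_eq_one.1 e13
  obtain ⟨r, hr⟩ := ncard_eq_one.1 e23
  have hpmem : p ∈ T₁ ∩ T₂ := by rw [hp]; exact rfl
  have hqmem : q ∈ T₁ ∩ T₃ := by rw [hq]; exact rfl
  have hrmem : r ∈ T₂ ∩ T₃ := by rw [hr]; exact rfl
  have pq : p ≠ q := by
    rintro rfl
    exact absurd (htripl ▸ (⟨hqmem, hpmem.2, hqmem.2⟩ : p ∈ (T₁ ∩ T₃) ∩ (T₂ ∩ T₃)))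
      (notMem_empty p)
  have pr : p ≠ r := by
    rintro rfl
    exact absurd (htripl ▸ (⟨⟨hpmem.1, hrmem.2⟩, hrmem⟩ : p ∈ (T₁ ∩ T₃) ∩ (T₂ ∩ T₃)))
      (notMem_empty p)
  have qr : q ≠ r := by
    rintro rfl
    exact absurd (htripl ▸ (⟨hqmem, hrmem.1, hqmem.2⟩ : q ∈ (T₁ ∩ T₃) ∩ (T₂ ∩ T₃)))
      (notMem_empty q)
  -- extract the third points x, y, z of the triangles
  have hpqT₁ : ({p, q} : Set α) ⊆ T₁ := by
    rintro t (rfl | rfl); exacts [hpmem.1, hqmem.1]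
  have hd1 : (T₁ \ {p, q}).ncard = 1 := by
    rw [ncard_diff hpqT₁, ncard_pair pq, hT13]
  obtain ⟨x, hx⟩ := ncard_eq_one.1 hd1
  have hxmem : x ∈ T₁ \ ({p, q} : Set α) := by rw [hx]; exact rfl
  have hT₁eq : T₁ = {p, q, x} := by
    apply subset_antisymm
    · intro t ht
      by_cases h : t ∈ ({p, q} : Set α)
      · rcases h with rfl | rfl
        · exact Or.inl rfl
        · exact Or.inr (Or.inl rfl)
      · have h2 : t ∈ T₁ \ ({p, q} : Set α) := ⟨ht, h⟩
        rw [hx] at h2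
        exact Or.inr (Or.inr h2)
    · rintro t (rfl | rfl | rfl); exacts [hpmem.1, hqmem.1, hxmem.1]
  have hxT₂ : x ∉ T₂ := by
    intro h
    have h2 : x ∈ T₁ ∩ T₂ := ⟨hxmem.1, h⟩
    rw [hp, mem_singleton_iff] at h2
    exact hxmem.2 (Or.inl h2)
  have hxT₃ : x ∉ T₃ := by
    intro h
    have h2 : x ∈ T₁ ∩ T₃ := ⟨hxmem.1, h⟩
    rw [hq, mem_singleton_iff] at h2
    exact hxmem.2 (Or.inr h2)
  have hprT₂ : ({p, r} : Set α) ⊆ T₂ := by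
    rintro t (rfl | rfl); exacts [hpmem.2, hrmem.1]
  have hd2 : (T₂ \ {p, r}).ncard = 1 := by
    rw [ncard_diff hprT₂, ncard_pair pr, hT23]
  obtain ⟨y, hy⟩ := ncard_eq_one.1 hd2
  have hymem : y ∈ T₂ \ ({p, r} : Set α) := by rw [hy]; exact rfl
  have hT₂eq : T₂ = {p, r, y} := by
    apply subset_antisymm
    · intro t ht
      by_cases h : t ∈ ({p, r} : Set α)
      · rcases h with rfl | rfl
        · exact Or.inl rfl
        · exact Or.inr (Or.inl rfl)
      · have h2 : t ∈ T₂ \ ({p, r} : Set α) := ⟨ht, h⟩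
        rw [hy] at h2
        exact Or.inr (Or.inr h2)
    · rintro t (rfl | rfl | rfl); exacts [hpmem.2, hrmem.1, hymem.1]
  have hyT₁ : y ∉ T₁ := by
    intro h
    have h2 : y ∈ T₁ ∩ T₂ := ⟨h, hymem.1⟩
    rw [hp, mem_singleton_iff] at h2
    exact hymem.2 (Or.inl h2)
  have hyT₃ : y ∉ T₃ := by
    intro h
    have h2 : y ∈ T₂ ∩ T₃ := ⟨hymem.1, h⟩
    rw [hr, mem_singleton_iff] at h2
    exact hymem.2 (Or.inr h2)
  have hqrT₃ : ({q, r} : Set α) ⊆ T₃ := by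
    rintro t (rfl | rfl); exacts [hqmem.2, hrmem.2]
  have hd3 : (T₃ \ {q, r}).ncard = 1 := by
    rw [ncard_diff hqrT₃, ncard_pair qr, hT33]
  obtain ⟨z, hz⟩ := ncard_eq_one.1 hd3
  have hzmem : z ∈ T₃ \ ({q, r} : Set α) := by rw [hz]; exact rfl
  have hT₃eq : T₃ = {q, r, z} := by
    apply subset_antisymm
    · intro t ht
      by_cases h : t ∈ ({q, r} : Set α)
      · rcases h with rfl | rfl
        · exact Or.inl rfl
        · exact Or.inr (Or.inl rfl)
      · have h2 : t ∈ T₃ \ ({q, r} : Set α) := ⟨ht, h⟩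
        rw [hz] at h2
        exact Or.inr (Or.inr h2)
    · rintro t (rfl | rfl | rfl); exacts [hqmem.2, hrmem.2, hzmem.1]
  have hzT₁ : z ∉ T₁ := by
    intro h
    have h2 : z ∈ T₁ ∩ T₃ := ⟨h, hzmem.1⟩
    rw [hq, mem_singleton_iff] at h2
    exact hzmem.2 (Or.inl h2)
  have hzT₂ : z ∉ T₂ := by
    intro h
    have h2 : z ∈ T₂ ∩ T₃ := ⟨h, hzmem.1⟩
    rw [hr, mem_singleton_iff] at h2
    exact hzmem.2 (Or.inr h2)
  -- pairwise distinctness of the six points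
  have hxp : x ≠ p := fun e => hxmem.2 (Or.inl e)
  have hxq : x ≠ q := fun e => hxmem.2 (Or.inr e)
  have hxr : x ≠ r := fun e => hxT₂ (e ▸ hrmem.1)
  have hyp : y ≠ p := fun e => hymem.2 (Or.inl e)
  have hyr : y ≠ r := fun e => hymem.2 (Or.inr e)
  have hyq : y ≠ q := fun e => hyT₁ (e ▸ hqmem.1)
  have hzq : z ≠ q := fun e => hzmem.2 (Or.inl e)
  have hzr : z ≠ r := fun e => hzmem.2 (Or.inr e)
  have hzp : z ≠ p := fun e => hzT₁ (e ▸ hpmem.1)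
  have hxy : x ≠ y := fun e => hxT₂ (e ▸ hymem.1)
  have hxz : x ≠ z := fun e => hxT₃ (e ▸ hzmem.1)
  have hyz : y ≠ z := fun e => hyT₃ (e ▸ hzmem.1)
  -- description of S
  have hSmem : ∀ t, t ∈ S ↔ (t = p ∨ t = q ∨ t = x ∨ t = r ∨ t = y ∨ t = z) := by
    intro t
    rw [← hUS, hT₁eq, hT₂eq, hT₃eq]
    simp only [mem_union, mem_insert_iff, mem_singleton_iff]
    tauto
  -- membership of points in hyperplanes
  have pH₁ : p ∈ H₁ := hct₁.1 hpmem.1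
  have qH₁ : q ∈ H₁ := hct₁.1 hqmem.1
  have xH₁ : x ∈ H₁ := hct₁.1 hxmem.1
  have pH₂ : p ∈ H₂ := hct₂.1 hpmem.2
  have rH₂ : r ∈ H₂ := hct₂.1 hrmem.1
  have yH₂ : y ∈ H₂ := hct₂.1 hymem.1
  have qH₃ : q ∈ H₃ := hct₃.1 hqmem.2
  have rH₃ : r ∈ H₃ := hct₃.1 hrmem.2
  have zH₃ : z ∈ H₃ := hct₃.1 hzmem.1
  -- the three hyperplanes are pairwise distinct
  have hH12 : H₁ = H₂ → False := by
    intro h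
    have hH13' : H₁ = H₃ := hyperplane_unique hcs hE hrk hH₁ hH₃ qr qH₁
      (by rw [h]; exact rH₂) qH₃ rH₃
    have c2 : ConsecTriple H₁ T₂ := by rw [h]; exact hct₂
    have c3 : ConsecTriple H₁ T₃ := by rw [hH13']; exact hct₃
    have p2 : idx H₁ T₂ % 2 = k := by rw [h]; exact hp2
    have p3 : idx H₁ T₃ % 2 = k := by rw [hH13']; exact hp3
    exact consec_three (hE.subset hH₁.1.subset_ground) hct₁ c2 c3 h12 h13 h23
      (hp1.trans p2.symm) (hp1.trans p3.symm) ⟨p, hpmem⟩ ⟨q, hqmem⟩ ⟨r, hrmem⟩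
  have hH13 : H₁ = H₃ → False := fun h =>
    hH12 (hyperplane_unique hcs hE hrk hH₁ hH₂ pr pH₁ (by rw [h]; exact rH₃) pH₂ rH₂)
  have hH23 : H₂ = H₃ → False := fun h =>
    hH12 (hyperplane_unique hcs hE hrk hH₁ hH₂ pq pH₁ qH₁ pH₂ (by rw [h]; exact qH₃))
  -- non-membership facts
  have hrH₁ : r ∉ H₁ := fun h =>
    hH12 (hyperplane_unique hcs hE hrk hH₁ hH₂ pr pH₁ h pH₂ rH₂)
  have hyH₁ : y ∉ H₁ := fun h =>
    hH12 (hyperplane_unique hcs hE hrk hH₁ hH₂ (Ne.symm hyp) pH₁ h pH₂ yH₂)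
  have hzH₁ : z ∉ H₁ := fun h =>
    hH13 (hyperplane_unique hcs hE hrk hH₁ hH₃ (Ne.symm hzq) qH₁ h qH₃ zH₃)
  have hqH₂ : q ∉ H₂ := fun h =>
    hH12 (hyperplane_unique hcs hE hrk hH₁ hH₂ pq pH₁ qH₁ pH₂ h)
  have hxH₂ : x ∉ H₂ := fun h =>
    hH12 (hyperplane_unique hcs hE hrk hH₁ hH₂ (Ne.symm hxp) pH₁ xH₁ pH₂ h)
  have hzH₂ : z ∉ H₂ := fun h =>
    hH23 (hyperplane_unique hcs hE hrk hH₂ hH₃ (Ne.symm hzr) rH₂ h rH₃ zH₃)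
  have hpH₃ : p ∉ H₃ := fun h =>
    hH23 (hyperplane_unique hcs hE hrk hH₂ hH₃ pr pH₂ rH₂ h rH₃)
  have hxH₃ : x ∉ H₃ := fun h =>
    hH13 (hyperplane_unique hcs hE hrk hH₁ hH₃ (Ne.symm hxq) qH₁ xH₁ qH₃ h)
  have hyH₃ : y ∉ H₃ := fun h =>
    hH23 (hyperplane_unique hcs hE hrk hH₂ hH₃ (Ne.symm hyr) rH₂ yH₂ rH₃ h)
  -- traces of the hyperplanes on S
  have hH₁S : H₁ ∩ S = T₁ := by
    apply subset_antisymm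
    · rintro t ⟨htH, htS⟩
      rcases (hSmem t).1 htS with rfl | rfl | rfl | rfl | rfl | rfl
      exacts [hpmem.1, hqmem.1, hxmem.1, absurd htH hrH₁, absurd htH hyH₁, absurd htH hzH₁]
    · exact subset_inter hct₁.1 hsub1
  have hH₂S : H₂ ∩ S = T₂ := by
    apply subset_antisymm
    · rintro t ⟨htH, htS⟩
      rcases (hSmem t).1 htS with rfl | rfl | rfl | rfl | rfl | rfl
      exacts [hpmem.2, absurd htH hqH₂, absurd htH hxH₂, hrmem.1, hymem.1, absurd htH hzH₂]
    · exact subset_inter hct₂.1 hsub2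
  have hH₃S : H₃ ∩ S = T₃ := by
    apply subset_antisymm
    · rintro t ⟨htH, htS⟩
      rcases (hSmem t).1 htS with rfl | rfl | rfl | rfl | rfl | rfl
      exacts [absurd htH hpH₃, hqmem.2, absurd htH hxH₃, hrmem.2, absurd htH hyH₃, hzmem.1]
    · exact subset_inter hct₃.1 hsub3
  -- points of S are in the ground set
  have hpS : p ∈ S := hsub1 hpmem.1
  have hqS : q ∈ S := hsub1 hqmem.1
  have hxS : x ∈ S := hsub1 hxmem.1
  have hrS : r ∈ S := hsub2 hrmem.1
  have hyS : y ∈ S := hsub2 hymem.1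
  have hzS : z ∈ S := hsub3 hzmem.1
  have hpqrS : ({p, q, r} : Set α) ⊆ S := by rintro t (rfl | rfl | rfl); exacts [hpS, hqS, hrS]
  have hpqr3 : ({p, q, r} : Set α).ncard = 3 := by
    rw [ncard_insert_of_notMem (by rintro (rfl | rfl); exacts [pq rfl, pr rfl]), ncard_pair qr]
  -- {p, q, r} is independent, hence a base
  have hpqrI : M.Indep {p, q, r} := by
    by_contra h
    have hdep : M.Dep {p, q, r} := dep_iff.2 ⟨h, hpqrS.trans hS⟩
    have hpq2 : M.Indep {p, q} := small_indep hcs hE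
      (by rintro t (rfl | rfl); exacts [hS hpS, hS hqS]) (by rw [ncard_pair pq])
    have h2 : ({p, q, r} : Set α) = insert r {p, q} := by
      ext t; simp only [mem_insert_iff, mem_singleton_iff]; tauto
    rw [h2] at hdep
    have h3 := (hpq2.insert_dep_iff).1 hdep
    have hcl : H₁ = M.closure {p, q} := hyperplane_eq_closure_pair hcs hE hrk hH₁ pH₁ qH₁ pq
    exact hrH₁ (hcl ▸ h3.1)
  have hbase : M.IsBase {p, q, r} := indep_base_of_ncard3 hE hrk hpqrI hpqr3
  have hNrk : RankEq (M ↾ S) 3 :=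
    ⟨{p, q, r}, base_of_restrict_base hE hrk hS hbase hpqrS, hpqr3⟩
  -- the circuits T₁, T₂, T₃
  have hC₁ : Circuit M T₁ := circuit_of_subset_hyperplane hcs hE hrk hH₁ hct₁.1 hT13
  have hC₂ : Circuit M T₂ := circuit_of_subset_hyperplane hcs hE hrk hH₂ hct₂.1 hT23
  have hC₃ : Circuit M T₃ := circuit_of_subset_hyperplane hcs hE hrk hH₃ hct₃.1 hT33
  have hxyz3 : ({x, y, z} : Set α).ncard = 3 := by
    rw [ncard_insert_of_notMem (by rintro (rfl | rfl); exacts [hxy rfl, hxz rfl]), ncard_pair hyz]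
  have hxyzS : ({x, y, z} : Set α) ⊆ S := by rintro t (rfl | rfl | rfl); exacts [hxS, hyS, hzS]
  -- classification of 3-element circuits inside S
  have hclass : ∀ U, Circuit M U → U ⊆ S → U.ncard = 3 →
      U = T₁ ∨ U = T₂ ∨ U = T₃ ∨ U = {x, y, z} := by
    intro U hU hUS' hU3
    have hUfin : U.Finite := hSfin.subset hUS'
    have hsub_case : ∀ (T H' : Set α), Hyperplane M H' → T ⊆ H' → H' ∩ S = T → T ⊆ S →
        T.ncard = 3 → 1 < (U ∩ T).ncard → U = T := by
      intro T H' hH' hTH' hHS' hTS hT3' hcard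
      obtain ⟨a, b, ha, hb, hab⟩ :=
        (one_lt_ncard_iff (hUfin.subset inter_subset_left)).1 hcard
      have hcl : H' = M.closure {a, b} :=
        hyperplane_eq_closure_pair hcs hE hrk hH' (hTH' ha.2) (hTH' hb.2) hab
      have hUcl : U ⊆ M.closure {a, b} :=
        circuit3_subset_closure_pair hU hU3 hE ha.1 hb.1 hab
      have hUT : U ⊆ T := fun t ht => by
        rw [← hHS']; exact ⟨by rw [hcl]; exact hUcl ht, hUS' ht⟩
      exact eq_of_subset_of_ncard_le hUT (by omega) (hSfin.subset hTS)
    by_cases c1 : 1 < (U ∩ T₁).ncard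
    · exact Or.inl (hsub_case T₁ H₁ hH₁ hct₁.1 hH₁S hsub1 hT13 c1)
    by_cases c2 : 1 < (U ∩ T₂).ncard
    · exact Or.inr (Or.inl (hsub_case T₂ H₂ hH₂ hct₂.1 hH₂S hsub2 hT23 c2))
    by_cases c3 : 1 < (U ∩ T₃).ncard
    · exact Or.inr (Or.inr (Or.inl (hsub_case T₃ H₃ hH₃ hct₃.1 hH₃S hsub3 hT33 c3)))
    -- no vertex of the triangle lies in U
    have hpair_le : ∀ (T : Set α) (u v : α), u ∈ U → v ∈ U → u ≠ v → u ∈ T → v ∈ T →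
        1 < (U ∩ T).ncard := by
      intro T u v hu hv huv huT hvT
      have hsub' : ({u, v} : Set α) ⊆ U ∩ T := by
        rintro t (rfl | rfl); exacts [⟨hu, huT⟩, ⟨hv, hvT⟩]
      calc 1 < ({u, v} : Set α).ncard := by rw [ncard_pair huv]; omega
        _ ≤ (U ∩ T).ncard := ncard_le_ncard hsub' (hUfin.subset inter_subset_left)
    have hUxyz : U ⊆ ({x, y, z} : Set α) := by
      intro t htU
      have hvertgen : ∀ v e₀, v ∈ U →
          (∀ e, e ∈ U → e ≠ v → e = e₀) → False := by
        intro v e₀ hvU hall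
        have hd : (U \ {v}).ncard = 2 := by
          rw [ncard_diff (singleton_subset_iff.2 hvU), ncard_singleton, hU3]
        obtain ⟨c, d, hcd, hcdeq⟩ := ncard_eq_two.1 hd
        have hcU : c ∈ U \ ({v} : Set α) := by rw [hcdeq]; exact Or.inl rfl
        have hdU : d ∈ U \ ({v} : Set α) := by rw [hcdeq]; exact Or.inr rfl
        have hce : c = e₀ := hall c hcU.1 (by simpa using hcU.2)
        have hde : d = e₀ := hall d hdU.1 (by simpa using hdU.2)
        exact hcd (hce.trans hde.symm)
      rcases (hSmem t).1 (hUS' htU) with rfl | rfl | rfl | rfl | rfl | rfl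
      · -- t = p : every other element of U must be z
        exfalso
        refine hvertgen t z htU ?_
        intro e heU het
        rcases (hSmem e).1 (hUS' heU) with rfl | rfl | rfl | rfl | rfl | rfl
        · exact absurd rfl het
        · exact absurd (hpair_le T₁ t e htU heU (Ne.symm het) hpmem.1 hqmem.1) c1
        · exact absurd (hpair_le T₁ t e htU heU (Ne.symm het) hpmem.1 hxmem.1) c1
        · exact absurd (hpair_le T₂ t e htU heU (Ne.symm het) hpmem.2 hrmem.1) c2
        · exact absurd (hpair_le T₂ t e htU heU (Ne.symm het) hpmem.2 hymem.1) c2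
        · rfl
      · -- t = q : every other element of U must be y
        exfalso
        refine hvertgen t y htU ?_
        intro e heU het
        rcases (hSmem e).1 (hUS' heU) with rfl | rfl | rfl | rfl | rfl | rfl
        · exact absurd (hpair_le T₁ t e htU heU (Ne.symm het) hqmem.1 hpmem.1) c1
        · exact absurd rfl het
        · exact absurd (hpair_le T₁ t e htU heU (Ne.symm het) hqmem.1 hxmem.1) c1
        · exact absurd (hpair_le T₃ t e htU heU (Ne.symm het) hqmem.2 hrmem.2) c3
        · rfl
        · exact absurd (hpair_le T₃ t e htU heU (Ne.symm het) hqmem.2 hzmem.1) c3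
      · exact Or.inl rfl
      · -- t = r : every other element of U must be x
        exfalso
        refine hvertgen t x htU ?_
        intro e heU het
        rcases (hSmem e).1 (hUS' heU) with rfl | rfl | rfl | rfl | rfl | rfl
        · exact absurd (hpair_le T₂ t e htU heU (Ne.symm het) hrmem.1 hpmem.2) c2
        · exact absurd (hpair_le T₃ t e htU heU (Ne.symm het) hrmem.2 hqmem.2) c3
        · rfl
        · exact absurd rfl het
        · exact absurd (hpair_le T₂ t e htU heU (Ne.symm het) hrmem.1 hymem.1) c2
        · exact absurd (hpair_le T₃ t e htU heU (Ne.symm het) hrmem.2 hzmem.1) c3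
      · exact Or.inr (Or.inl rfl)
      · exact Or.inr (Or.inr rfl)
    exact Or.inr (Or.inr (Or.inr
      (eq_of_subset_of_ncard_le hUxyz (by omega) (hSfin.subset hxyzS))))
  -- sparse paving for the restriction
  have hsp : SparsePaving (M ↾ S) := by
    intro C hC hns
    obtain ⟨hCM, hCS⟩ := (restrict_circuit_iff hS).1 hC
    rcases hcs C hCM with h3c | h4c
    · rcases hclass C hCM hCS h3c with rfl | rfl | rfl | rfl
      · have hne : H₁ ∩ S ≠ S := by
          rw [hH₁S]; intro heq
          rw [heq, hS6] at hT13; omega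
        have := hyperplane_restrict hcs hE hrk hS hH₁ ⟨pH₁, hpS⟩ ⟨qH₁, hqS⟩ pq hne
        rwa [hH₁S] at this
      · have hne : H₂ ∩ S ≠ S := by
          rw [hH₂S]; intro heq
          rw [heq, hS6] at hT23; omega
        have := hyperplane_restrict hcs hE hrk hS hH₂ ⟨pH₂, hpS⟩ ⟨rH₂, hrS⟩ pr hne
        rwa [hH₂S] at this
      · have hne : H₃ ∩ S ≠ S := by
          rw [hH₃S]; intro heq
          rw [heq, hS6] at hT33; omega
        have := hyperplane_restrict hcs hE hrk hS hH₃ ⟨qH₃, hqS⟩ ⟨rH₃, hrS⟩ qr hne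
        rwa [hH₃S] at this
      · -- C = {x, y, z}
        have hxyI : M.Indep {x, y} := small_indep hcs hE
          (by rintro t (rfl | rfl); exacts [hS hxS, hS hyS]) (by rw [ncard_pair hxy])
        have hH₄ : Hyperplane M (M.closure {x, y}) := closure_pair_hyperplane hE hrk hxyI hxy
        have hxH₄ : x ∈ M.closure {x, y} := M.subset_closure _ hxyI.subset_ground (Or.inl rfl)
        have hyH₄ : y ∈ M.closure {x, y} :=
          M.subset_closure _ hxyI.subset_ground (Or.inr rfl)
        have hzH₄ : z ∈ M.closure {x, y} :=
          circuit3_subset_closure_pair hCM hxyz3 hE (Or.inl rfl) (Or.inr (Or.inl rfl)) hxy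
            (Or.inr (Or.inr rfl))
        have hH₄S : M.closure {x, y} ∩ S = {x, y, z} := by
          apply subset_antisymm
          · rintro t ⟨htH, htS⟩
            rcases (hSmem t).1 htS with rfl | rfl | rfl | rfl | rfl | rfl
            · exact absurd ((hyperplane_unique hcs hE hrk hH₄ hH₁ (Ne.symm hxp) htH hxH₄
                pH₁ xH₁) ▸ hyH₄) hyH₁
            · exact absurd ((hyperplane_unique hcs hE hrk hH₄ hH₁ (Ne.symm hxq) htH hxH₄
                qH₁ xH₁) ▸ hyH₄) hyH₁
            · exact Or.inl rfl
            · exact absurd ((hyperplane_unique hcs hE hrk hH₄ hH₂ (Ne.symm hyr) htH hyH₄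
                rH₂ yH₂) ▸ hxH₄) hxH₂
            · exact Or.inr (Or.inl rfl)
            · exact Or.inr (Or.inr rfl)
          · rintro t (rfl | rfl | rfl); exacts [⟨hxH₄, hxS⟩, ⟨hyH₄, hyS⟩, ⟨hzH₄, hzS⟩]
        have hne : M.closure {x, y} ∩ S ≠ S := by
          rw [hH₄S]; intro heq
          rw [heq, hS6] at hxyz3; omega
        have := hyperplane_restrict hcs hE hrk hS hH₄ ⟨hxH₄, hxS⟩ ⟨hyH₄, hyS⟩ hxy hne
        rwa [hH₄S] at this
    · exfalso
      apply hns
      obtain ⟨D, hDsub, hD3⟩ := exists_subset_card_eq (s := C) (n := 3) (by omega)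
      have hDC : D ⊂ C := hDsub.ssubset_of_ne (fun e => by rw [e] at hD3; omega)
      have hDind : M.Indep D := hCM.2 D hDC
      have hDbase := indep_base_of_ncard3 hE hrk hDind hD3
      exact IsBase.spanning_of_superset
        (base_of_restrict_base hE hrk hS hDbase (hDsub.trans hCS)) hDsub
        (by rw [restrict_ground_eq]; exact hCS)
  -- set up the labelling
  classical
  set a : Fin 6 → α := ![q, x, p, y, r, z] with ha
  have ha0 : a 0 = q := rfl
  have ha1 : a 1 = x := rfl
  have ha2 : a 2 = p := rfl
  have ha3 : a 3 = y := rfl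
  have ha4 : a 4 = r := rfl
  have ha5 : a 5 = z := rfl
  have hrange : Set.range a = S := by
    apply subset_antisymm
    · rintro t ⟨i, rfl⟩
      fin_cases i
      exacts [hqS, hxS, hpS, hyS, hrS, hzS]
    · intro t htS
      rcases (hSmem t).1 htS with rfl | rfl | rfl | rfl | rfl | rfl
      exacts [⟨2, rfl⟩, ⟨0, rfl⟩, ⟨1, rfl⟩, ⟨4, rfl⟩, ⟨3, rfl⟩, ⟨5, rfl⟩]
  have hainj : Function.Injective a := by
    intro i j hij
    fin_cases i <;> fin_cases j <;>
      first
        | rfl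
        | (exfalso; rw [ha] at hij; simp only [Matrix.cons_val_zero, Matrix.cons_val_one,
            Matrix.head_cons, Matrix.cons_val_two, Matrix.tail_cons, Matrix.cons_val_three,
            Matrix.cons_val_four, Matrix.cons_val_succ] at hij;
           first
             | exact pq hij | exact pq hij.symm | exact pr hij | exact pr hij.symm
             | exact qr hij | exact qr hij.symm | exact hxp hij | exact hxp hij.symm
             | exact hxq hij | exact hxq hij.symm | exact hxr hij | exact hxr hij.symm
             | exact hyp hij | exact hyp hij.symm | exact hyq hij | exact hyq hij.symm
             | exact hyr hij | exact hyr hij.symm | exact hzp hij | exact hzp hij.symm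
             | exact hzq hij | exact hzq hij.symm | exact hzr hij | exact hzr hij.symm
             | exact hxy hij | exact hxy hij.symm | exact hxz hij | exact hxz hij.symm
             | exact hyz hij | exact hyz hij.symm)
  have hNE : (M ↾ S).E = Set.range a := by rw [restrict_ground_eq, hrange]
  have ht1 : ({a 0, a 1, a 2} : Set α) = T₁ := by
    rw [ha0, ha1, ha2, hT₁eq]
    ext t; simp only [mem_insert_iff, mem_singleton_iff]; tauto
  have ht2 : ({a 2, a 3, a 4} : Set α) = T₂ := by
    rw [ha2, ha3, ha4, hT₂eq]
    ext t; simp only [mem_insert_iff, mem_singleton_iff]; tauto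
  have ht3 : ({a 4, a 5, a 0} : Set α) = T₃ := by
    rw [ha4, ha5, ha0, hT₃eq]
    ext t; simp only [mem_insert_iff, mem_singleton_iff]; tauto
  have ht4 : ({a 1, a 3, a 5} : Set α) = {x, y, z} := by rw [ha1, ha3, ha5]
  by_cases hxyzI : M.Indep {x, y, z}
  · -- whirl minor
    apply hfree.1
    refine ⟨M ↾ S, restrict_isMinor hS, a, hainj, hNE, hNrk, hsp, ?_⟩
    intro C
    rw [ht1, ht2, ht3]
    constructor
    · rintro ⟨hC, h3c⟩
      obtain ⟨hCM, hCS⟩ := (restrict_circuit_iff hS).1 hC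
      rcases hclass C hCM hCS h3c with rfl | rfl | rfl | rfl
      · exact Or.inl rfl
      · exact Or.inr (Or.inl rfl)
      · exact Or.inr (Or.inr rfl)
      · exact absurd hxyzI (dep_iff.1 hCM.1).1
    · rintro (rfl | rfl | rfl)
      · exact ⟨(restrict_circuit_iff hS).2 ⟨hC₁, hsub1⟩, hT13⟩
      · exact ⟨(restrict_circuit_iff hS).2 ⟨hC₂, hsub2⟩, hT23⟩
      · exact ⟨(restrict_circuit_iff hS).2 ⟨hC₃, hsub3⟩, hT33⟩
  · -- M(K₄) minor
    have hxyzD : M.Dep {x, y, z} := dep_iff.2 ⟨hxyzI, hxyzS.trans hS⟩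
    have hCxyz : Circuit M {x, y, z} := by
      refine ⟨hxyzD, fun D hD => ?_⟩
      have hfin' : ({x, y, z} : Set α).Finite := hSfin.subset hxyzS
      have := ncard_lt_ncard hD hfin'
      exact small_indep hcs hE ((hD.subset.trans hxyzS).trans hS) (by omega)
    apply hfree.2
    refine ⟨M ↾ S, restrict_isMinor hS, a, hainj, hNE, hNrk, hsp, ?_⟩
    intro C
    rw [ht1, ht2, ht3, ht4]
    constructor
    · rintro ⟨hC, h3c⟩
      obtain ⟨hCM, hCS⟩ := (restrict_circuit_iff hS).1 hC
      rcases hclass C hCM hCS h3c with rfl | rfl | rfl | rfl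
      · exact Or.inl rfl
      · exact Or.inr (Or.inl rfl)
      · exact Or.inr (Or.inr (Or.inl rfl))
      · exact Or.inr (Or.inr (Or.inr rfl))
    · rintro (rfl | rfl | rfl | rfl)
      · exact ⟨(restrict_circuit_iff hS).2 ⟨hC₁, hsub1⟩, hT13⟩
      · exact ⟨(restrict_circuit_iff hS).2 ⟨hC₂, hsub2⟩, hT23⟩
      · exact ⟨(restrict_circuit_iff hS).2 ⟨hC₃, hsub3⟩, hT33⟩
      · exact ⟨(restrict_circuit_iff hS).2 ⟨hCxyz, hxyzS⟩, hxyz3⟩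


lemma part1 {M : Matroid α} (hE : M.E.Finite) (hM : Paving3 M) (hfree : WFree M) (k : ℕ)
    {S : Set α} (hS : S ⊆ M.E) (hS6 : S.ncard = 6) : {T ∈ Vk M k | T ⊆ S}.ncard ≤ 2 := by
  by_contra h
  obtain ⟨W, hWsub, hW3⟩ := exists_subset_card_eq (s := {T ∈ Vk M k | T ⊆ S}) (n := 3) (by omega)
  obtain ⟨U₁, U₂, U₃, h12, h13, h23, rfl⟩ := ncard_eq_three.1 hW3
  have m1 := hWsub (Or.inl rfl)
  have m2 := hWsub (Or.inr (Or.inl rfl))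
  have m3 := hWsub (Or.inr (Or.inr rfl))
  exact core hE hM hfree hS hS6 m1.1 m2.1 m3.1 m1.2 m2.2 m3.2 h12 h13 h23

lemma part2core {M N N' : Matroid α} {k : ℕ} (hE : M.E.Finite) (hM : Paving3 M)
    (hfree : WFree M) (hNE : N.E = M.E) (hNrk : RankEq N 3)
    (hNc : {C : Set α | Circuit N C ∧ ¬ N.Spanning C} = Vk M k)
    (hmin : IsMinor N' N) (a : Fin 6 → α) (hainj : Function.Injective a)
    (hgr : N'.E = Set.range a) (hrk' : RankEq N' 3)
    (hc1 : Circuit N' {a 0, a 1, a 2}) (hc2 : Circuit N' {a 2, a 3, a 4})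
    (hc3 : Circuit N' {a 4, a 5, a 0}) : False := by
  obtain ⟨C, D, hND⟩ := hmin
  subst hND
  have hE' : N.E.Finite := by rw [hNE]; exact hE
  -- the contraction has a base of full size
  obtain ⟨B', hB', hB'3⟩ := hrk'
  have hB'con : (Contract N C).Indep B' := (restrict_indep_iff.1 hB'.indep).1
  obtain ⟨B'', hB'', hB'B''⟩ := hB'con.exists_isBase_superset
  have hB''ind : N.Indep B'' := contract_indep_of_indep hB''.indep
  obtain ⟨B₀, hB₀, hB''B₀⟩ := hB''ind.exists_isBase_superset
  have hB₀3 : B₀.ncard = 3 := base_ncard3 hE' hNrk hB₀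
  have hB''fin : B''.Finite := hE'.subset hB''ind.subset_ground
  have hB''3 : B''.ncard = 3 := by
    have h1 : B''.ncard ≤ 3 := hB₀3 ▸ ncard_le_ncard hB''B₀ (hE'.subset hB₀.subset_ground)
    have h2 : 3 ≤ B''.ncard := hB'3 ▸ ncard_le_ncard hB'B'' hB''fin
    omega
  -- circuits of the minor are circuits of N
  have hN'E : (Delete (Contract N C) D).E ⊆ N.E \ C := fun t ht => diff_subset ht
  have hcirc' : ∀ T, Circuit (Delete (Contract N C) D) T → Circuit N T := by
    rintro T ⟨hTdep, hTmin⟩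
    have hTsub : T ⊆ (Delete (Contract N C) D).E := hTdep.subset_ground
    have hndep : ¬ (Contract N C).Indep T := (restrict_dep_iff.1 hTdep).1
    refine ⟨dep_iff.2 ⟨fun hNind => hndep ?_, (hTsub.trans hN'E).trans diff_subset⟩,
      fun D' hD' => ?_⟩
    · exact contract_indep_of_full_rank hE' hNrk hB'' hB''3 hNind (hTsub.trans hN'E)
    · exact contract_indep_of_indep (restrict_indep_iff.1 (hTmin D' hD')).1
  -- the triples as sets have 3 elements and are nonspanning circuits, hence in Vk
  have hne01 : a 0 ≠ a 1 := fun e => absurd (hainj e) (by decide)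
  have hne02 : a 0 ≠ a 2 := fun e => absurd (hainj e) (by decide)
  have hne12 : a 1 ≠ a 2 := fun e => absurd (hainj e) (by decide)
  have hne23 : a 2 ≠ a 3 := fun e => absurd (hainj e) (by decide)
  have hne24 : a 2 ≠ a 4 := fun e => absurd (hainj e) (by decide)
  have hne34 : a 3 ≠ a 4 := fun e => absurd (hainj e) (by decide)
  have hne45 : a 4 ≠ a 5 := fun e => absurd (hainj e) (by decide)
  have hne40 : a 4 ≠ a 0 := fun e => absurd (hainj e) (by decide)
  have hne50 : a 5 ≠ a 0 := fun e => absurd (hainj e) (by decide)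
  have hc13 : ({a 0, a 1, a 2} : Set α).ncard = 3 := by
    rw [ncard_insert_of_notMem (by rintro (h | h); exacts [hne01 h, hne02 h]),
      ncard_pair hne12]
  have hc23 : ({a 2, a 3, a 4} : Set α).ncard = 3 := by
    rw [ncard_insert_of_notMem (by rintro (h | h); exacts [hne23 h, hne24 h]),
      ncard_pair hne34]
  have hc33 : ({a 4, a 5, a 0} : Set α).ncard = 3 := by
    rw [ncard_insert_of_notMem (by rintro (h | h); exacts [hne45 h, hne40 h]),
      ncard_pair hne50]
  have hvk : ∀ T, Circuit (Delete (Contract N C) D) T → T.ncard = 3 → T ∈ Vk M k := by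
    intro T hT hT3
    have hTN : Circuit N T := hcirc' T hT
    have hTfin : T.Finite := hE'.subset hTN.1.subset_ground
    have hns : ¬ N.Spanning T := by
      intro hsp
      obtain ⟨B₁, hB₁, hB₁T⟩ := hsp.exists_isBase_subset
      have hB₁3 : B₁.ncard = 3 := base_ncard3 hE' hNrk hB₁
      have : B₁ = T := eq_of_subset_of_ncard_le hB₁T (by omega) hTfin
      exact (dep_iff.1 hTN.1).1 (this ▸ hB₁.indep)
    rw [← hNc]
    exact ⟨hTN, hns⟩
  have hv1 : ({a 0, a 1, a 2} : Set α) ∈ Vk M k := hvk _ hc1 hc13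
  have hv2 : ({a 2, a 3, a 4} : Set α) ∈ Vk M k := hvk _ hc2 hc23
  have hv3 : ({a 4, a 5, a 0} : Set α) ∈ Vk M k := hvk _ hc3 hc33
  -- the six-element set
  have hSsub : Set.range a ⊆ M.E := by
    rw [← hgr, ← hNE]
    exact fun t ht => diff_subset ((hN'E) ht)
  have hS6 : (Set.range a).ncard = 6 := by
    rw [← image_univ, ncard_image_of_injective _ hainj]
    simp [ncard_univ]
  have hsub1 : ({a 0, a 1, a 2} : Set α) ⊆ Set.range a := by
    rintro t (rfl | rfl | rfl) <;> exact mem_range_self _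
  have hsub2 : ({a 2, a 3, a 4} : Set α) ⊆ Set.range a := by
    rintro t (rfl | rfl | rfl) <;> exact mem_range_self _
  have hsub3 : ({a 4, a 5, a 0} : Set α) ⊆ Set.range a := by
    rintro t (rfl | rfl | rfl) <;> exact mem_range_self _
  have hne12' : ({a 0, a 1, a 2} : Set α) ≠ {a 2, a 3, a 4} := by
    intro e
    have : a 0 ∈ ({a 2, a 3, a 4} : Set α) := e ▸ Or.inl rfl
    rcases this with h | h | h <;> exact absurd (hainj h) (by decide)
  have hne13' : ({a 0, a 1, a 2} : Set α) ≠ {a 4, a 5, a 0} := by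
    intro e
    have : a 1 ∈ ({a 4, a 5, a 0} : Set α) := e ▸ Or.inr (Or.inl rfl)
    rcases this with h | h | h <;> exact absurd (hainj h) (by decide)
  have hne23' : ({a 2, a 3, a 4} : Set α) ≠ {a 4, a 5, a 0} := by
    intro e
    have : a 2 ∈ ({a 4, a 5, a 0} : Set α) := e ▸ Or.inl rfl
    rcases this with h | h | h <;> exact absurd (hainj h) (by decide)
  exact core hE hM hfree hSsub hS6 hv1 hv2 hv3 hsub1 hsub2 hsub3 hne12' hne13' hne23'

end Paper

namespace Paper

/-- If a rank-3 paving matroid `M` on a finite linearly ordered ground set has no `𝒲³`- and no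
`M(K₄)`-minor, then for `k ∈ {0,1}` every 6-element subset of the ground set contains at most
two members of `𝒱^k(M)`; equivalently, every rank-3 sparse paving matroid whose
circuit-hyperplane family is `𝒱^k(M)` has no `𝒲³`- or `M(K₄)`-minor. -/
theorem paving_encoding_WFree {α : Type*} [LinearOrder α] (E : Set α) (hE : E.Finite)
    (M : Matroid α) (hME : M.E = E) (hM : Paving3 M) (hfree : WFree M) :
    ∀ k ∈ ({0, 1} : Set ℕ),
      (∀ S : Set α, S ⊆ E → S.ncard = 6 → {T ∈ Vk M k | T ⊆ S}.ncard ≤ 2) ∧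
      (∀ N : Matroid α, N.E = E → RankEq N 3 → SparsePaving N →
        {C : Set α | Circuit N C ∧ ¬ N.Spanning C} = Vk M k → WFree N) := by
  intro k _
  have hEM : M.E.Finite := by rw [hME]; exact hE
  constructor
  · intro S hSsub hS6
    exact part1 hEM hM hfree k (by rw [hME]; exact hSsub) hS6
  · intro N hNE hNrk _ hNc
    have hNE' : N.E = M.E := by rw [hNE, hME]
    constructor
    · rintro ⟨N', hmin, awhirl⟩
      obtain ⟨a, hainj, hgr, hrk', _, hiff⟩ := awhirl
      obtain ⟨hc1, -⟩ := (hiff _).2 (Or.inl rfl)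
      obtain ⟨hc2, -⟩ := (hiff _).2 (Or.inr (Or.inl rfl))
      obtain ⟨hc3, -⟩ := (hiff _).2 (Or.inr (Or.inr rfl))
      exact part2core hEM hM hfree hNE' hNrk hNc hmin a hainj hgr hrk' hc1 hc2 hc3
    · rintro ⟨N', hmin, amk4⟩
      obtain ⟨a, hainj, hgr, hrk', _, hiff⟩ := amk4
      obtain ⟨hc1, -⟩ := (hiff _).2 (Or.inl rfl)
      obtain ⟨hc2, -⟩ := (hiff _).2 (Or.inr (Or.inl rfl))
      obtain ⟨hc3, -⟩ := (hiff _).2 (Or.inr (Or.inr (Or.inl rfl)))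
      exact part2core hEM hM hfree hNE' hNrk hNc hmin a hainj hgr hrk' hc1 hc2 hc3

end Paper
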